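/- Let P be an N×(N-1) complex matrix, let Q be the N×(N-k+1) matrix obtained from P by deleting any k-2 of its columns (3 ≤ k < N), and let a_1, ..., a_k ∈ ℂ^N. Then the alternating sum over i = 1, ..., k of (-1)^{i-1} det(P, a_i) · det(Q, a_1, ..., a_{i-1}, a_{i+1}, ..., a_k) equals zero. -/

import Mathlib

/-- Expansion of det(P|v) along the last column. -/
lemma detcol {n : ℕ} (P : Matrix (Fin (n+1)) (Fin n) ℂ) (v : Fin (n+1) → ℂ) :
    Matrix.det (Matrix.of fun r (j : Fin (n+1)) =>
        if h : (j : ℕ) < n then P r ⟨j, h⟩ else v r) =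
      ∑ r : Fin (n+1), ((-1:ℂ)^((r:ℕ) + n) *
        Matrix.det (Matrix.of fun (r' : Fin n) (j : Fin n) => P (r.succAbove r') j)) * v r := by
  rw [Matrix.det_succ_column _ (Fin.last n)]
  refine Finset.sum_congr rfl fun i _ => ?_
  have h1 : (Matrix.of fun r (j : Fin (n+1)) =>
      if h : (j : ℕ) < n then P r ⟨j, h⟩ else v r) i (Fin.last n) = v i := by
    simp
  have h2 : ((Matrix.of fun r (j : Fin (n+1)) =>
      if h : (j : ℕ) < n then P r ⟨j, h⟩ else v r).submatrix i.succAbove (Fin.last n).succAbove)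
      = Matrix.of fun (r' : Fin n) (j : Fin n) => P (i.succAbove r') j := by
    ext r' j
    simp [Fin.succAbove_last]
  rw [h1, h2, Fin.val_last]
  ring

/-- Antisymmetrized Cramer-type identity: for a linear functional `v ↦ ∑ r, c r * v r`
and `m+2` vectors in `ℂ^{m+1}`, the alternating sum vanishes. -/
lemma lemA {m : ℕ} (c : Fin (m+1) → ℂ) (u : Fin (m+2) → Fin (m+1) → ℂ) :
    ∑ j : Fin (m+2), (-1:ℂ)^(j:ℕ) * ((∑ r : Fin (m+1), c r * u j r) *
      Matrix.det (Matrix.of fun r (i : Fin (m+1)) => u (j.succAbove i) r)) = 0 := by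
  set M : Matrix (Fin (m+2)) (Fin (m+2)) ℂ :=
    Matrix.of (fun r j => if h : (r:ℕ) < m+1 then u j ⟨r,h⟩ else ∑ r' : Fin (m+1), c r' * u j r')
    with hM
  set c' : Fin (m+2) → ℂ := fun r => if h : (r:ℕ) < m+1 then c ⟨r,h⟩ else 0 with hc'
  have hrow : M (Fin.last (m+1)) = ∑ k, c' k • M k := by
    funext j
    rw [Finset.sum_apply]
    have hterm : ∀ k : Fin (m+2), (c' k • M k) j
        = if h : (k:ℕ) < m+1 then c ⟨k,h⟩ * u j ⟨k,h⟩ else 0 := by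
      intro k
      by_cases h : (k:ℕ) ≤ m <;> simp [hc', hM, h]
    rw [Finset.sum_congr rfl fun k _ => hterm k]
    rw [Fin.sum_univ_castSucc]
    simp [hM, Fin.is_le]
  have hdet : M.det = 0 := by
    have : M = M.updateRow (Fin.last (m+1)) (∑ k, c' k • M k) := by
      rw [← hrow, Matrix.updateRow_eq_self]
    rw [this, Matrix.det_updateRow_sum]
    have : c' (Fin.last (m+1)) = 0 := by simp [hc']
    rw [this, zero_smul]
  have e1 : ∀ j : Fin (m+2), M (Fin.last (m+1)) j = ∑ r : Fin (m+1), c r * u j r := by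
    intro j; simp [hM]
  have e2 : ∀ j : Fin (m+2), M.submatrix (Fin.last (m+1)).succAbove j.succAbove
      = Matrix.of fun r (i : Fin (m+1)) => u (j.succAbove i) r := by
    intro j; ext r i
    simp [hM, Fin.succAbove_last]
    intro h; exact absurd h (not_lt.mpr (Fin.is_le r))
  have key : ∑ j : Fin (m+2), (-1:ℂ)^((m+1) + (j:ℕ)) * ((∑ r : Fin (m+1), c r * u j r) *
      Matrix.det (Matrix.of fun r (i : Fin (m+1)) => u (j.succAbove i) r)) = 0 := by
    rw [← hdet, Matrix.det_succ_row M (Fin.last (m+1))]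
    refine Finset.sum_congr rfl fun j _ => ?_
    rw [e1, e2, Fin.val_last]
    ring
  have key2 : (-1:ℂ)^(m+1) * ∑ j : Fin (m+2), (-1:ℂ)^(j:ℕ) *
      ((∑ r : Fin (m+1), c r * u j r) *
        Matrix.det (Matrix.of fun r (i : Fin (m+1)) => u (j.succAbove i) r)) = 0 := by
    rw [Finset.mul_sum, ← key]
    refine Finset.sum_congr rfl fun j _ => ?_
    rw [pow_add]; ring
  rcases mul_eq_zero.mp key2 with h | h
  · exact absurd h (pow_ne_zero _ (by norm_num))
  · exact h

/-- Generalized Plücker relation (Corollary 2.3.1): let `P` be an `(n+1)×n` complex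
matrix, let `Q = P ∘ g` be obtained from `P` by deleting `k-2` columns (so `g` is a
strictly monotone selection of the remaining `n+2-k` columns), with `3 ≤ k ≤ n`
(i.e. `k < N` where `N = n+1` is the number of rows), and let `a 0, …, a (k-1)` be
vectors in `ℂ^{n+1}`. Then
`∑_{i} (-1)^i det(P, a i) · det(Q, a 0, …, â i, …, a (k-1)) = 0`. -/
theorem plucker_general {n k : ℕ} (hk : 3 ≤ k) (hkN : k < n + 1)
    (P : Matrix (Fin (n + 1)) (Fin n) ℂ)
    (g : Fin (n + 2 - k) → Fin n) (hg : StrictMono g)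
    (a : Fin k → Fin (n + 1) → ℂ) :
    ∑ i : Fin k,
      (-1 : ℂ) ^ (i : ℕ) *
        (Matrix.det (Matrix.of fun r (j : Fin (n + 1)) =>
            if h : (j : ℕ) < n then P r ⟨j, h⟩ else a i r) *
         Matrix.det (Matrix.of fun r (j : Fin (n + 1)) =>
            if h : (j : ℕ) < n + 2 - k then P r (g ⟨j, h⟩)
            else if (j : ℕ) - (n + 2 - k) < (i : ℕ) then
              a ⟨(j : ℕ) - (n + 2 - k), by omega⟩ r
            else
              a ⟨(j : ℕ) - (n + 2 - k) + 1, by omega⟩ r)) = 0 := by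
  set c : Fin (n+1) → ℂ := fun r => (-1:ℂ)^((r:ℕ) + n) *
    Matrix.det (Matrix.of fun (r' : Fin n) (j : Fin n) => P (r.succAbove r') j) with hc
  set u : Fin (n+2) → Fin (n+1) → ℂ := fun j =>
    if h : (j:ℕ) < n+2-k then (fun r => P r (g ⟨j,h⟩))
    else a ⟨(j:ℕ) - (n+2-k), by omega⟩ with hu
  set F : Fin (n+2) → ℂ := fun j => (-1:ℂ)^(j:ℕ) * ((∑ r : Fin (n+1), c r * u j r) *
      Matrix.det (Matrix.of fun r (i : Fin (n+1)) => u (j.succAbove i) r)) with hF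
  have key : ∑ j : Fin (n+2), F j = 0 := lemA c u
  set e : Fin k → Fin (n+2) := fun i => ⟨n+2-k+(i:ℕ), by omega⟩ with he
  -- terms with j < n+2-k vanish
  have hzero : ∀ j : Fin (n+2), (j:ℕ) < n+2-k → F j = 0 := by
    intro j hj
    have h1 : (∑ r : Fin (n+1), c r * u j r) = 0 := by
      simp only [hc]
      rw [← detcol P (u j)]
      apply Matrix.det_zero_of_column_eq (i := Fin.castSucc (g ⟨(j:ℕ), hj⟩)) (j := Fin.last n)
      · intro h
        have := congrArg Fin.val h
        simp at this
        omega
      · intro r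
        simp [hu, hj]
    rw [hF]
    simp [h1]
  have himage : ∀ j : Fin (n+2), j ∉ Finset.image e Finset.univ → F j = 0 := by
    intro j hj
    by_cases hlt : (j:ℕ) < n+2-k
    · exact hzero j hlt
    · exfalso
      apply hj
      refine Finset.mem_image.mpr ⟨⟨(j:ℕ)-(n+2-k), by omega⟩, Finset.mem_univ _, ?_⟩
      apply Fin.ext
      simp [he]
      omega
  have einj : Function.Injective e := by
    intro i j hij
    apply Fin.ext
    have := congrArg Fin.val hij
    simp [he] at this
    omega
  have hsum : ∑ i : Fin k, F (e i) = 0 := by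
    rw [← Finset.sum_image (fun i _ j _ h => einj h)]
    rw [Finset.sum_subset (Finset.subset_univ _) (fun j _ hj => himage j hj)]
    exact key
  have hFe : ∀ i : Fin k, F (e i) = (-1:ℂ)^(n+2-k) * ((-1:ℂ)^(i:ℕ) *
      (Matrix.det (Matrix.of fun r (j : Fin (n + 1)) =>
            if h : (j : ℕ) < n then P r ⟨j, h⟩ else a i r) *
       Matrix.det (Matrix.of fun r (j : Fin (n + 1)) =>
            if h : (j : ℕ) < n + 2 - k then P r (g ⟨j, h⟩)
            else if (j : ℕ) - (n + 2 - k) < (i : ℕ) then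
              a ⟨(j : ℕ) - (n + 2 - k), by omega⟩ r
            else
              a ⟨(j : ℕ) - (n + 2 - k) + 1, by omega⟩ r))) := by
    intro i
    have hei : ((e i : Fin (n+2)) : ℕ) = n+2-k+(i:ℕ) := rfl
    have hai : u (e i) = a i := by
      simp only [hu]
      rw [dif_neg (show ¬ ((e i : Fin (n+2)):ℕ) < n+2-k by rw [hei]; omega)]
      exact congrArg a (Fin.ext (by simp only [Fin.val_mk, hei]; omega))
    have hphi' : (∑ r : Fin (n+1), c r * u (e i) r) =
        Matrix.det (Matrix.of fun r (j : Fin (n + 1)) =>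
            if h : (j : ℕ) < n then P r ⟨j, h⟩ else a i r) := by
      rw [hai, detcol P (a i)]
    have hQ : (Matrix.of fun r (i' : Fin (n+1)) => u ((e i).succAbove i') r) =
        Matrix.of fun r (j : Fin (n + 1)) =>
            if h : (j : ℕ) < n + 2 - k then P r (g ⟨j, h⟩)
            else if (j : ℕ) - (n + 2 - k) < (i : ℕ) then
              a ⟨(j : ℕ) - (n + 2 - k), by omega⟩ r
            else
              a ⟨(j : ℕ) - (n + 2 - k) + 1, by omega⟩ r := by
      ext r i'
      simp only [Matrix.of_apply]
      by_cases hlt : (i':ℕ) < n+2-k+(i:ℕ)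
      · have h1 : Fin.castSucc i' < e i := by
          rw [Fin.lt_def]; simpa using hlt
        rw [Fin.succAbove_of_castSucc_lt _ _ h1]
        simp only [hu, Fin.coe_castSucc]
        by_cases h2 : (i':ℕ) < n+2-k
        · rw [dif_pos h2, dif_pos h2]
        · rw [dif_neg h2, dif_neg h2, if_pos (show (i':ℕ) - (n+2-k) < (i:ℕ) by omega)]
      · have h1 : e i ≤ Fin.castSucc i' := by
          rw [Fin.le_def]; simpa using (not_lt.mp hlt)
        rw [Fin.succAbove_of_le_castSucc _ _ h1]
        simp only [hu, Fin.val_succ]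
        rw [dif_neg (show ¬ (i':ℕ)+1 < n+2-k by omega),
            dif_neg (show ¬ (i':ℕ) < n+2-k by omega),
            if_neg (show ¬ (i':ℕ) - (n+2-k) < (i:ℕ) by omega)]
        congr 1
        apply Fin.ext
        simp
        omega
    have hsign : (-1:ℂ)^((e i : Fin (n+2)):ℕ) = (-1:ℂ)^(n+2-k) * (-1:ℂ)^(i:ℕ) := by
      rw [hei, pow_add]
    simp only [hF]
    rw [hphi', hQ, hsign]
    ring
  rw [Finset.sum_congr rfl (fun i _ => hFe i), ← Finset.mul_sum] at hsum
  rcases mul_eq_zero.mp hsum with h | h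
  · exact absurd h (pow_ne_zero _ (by norm_num))
  · exact h
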